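/- arXiv:2409.07213 — 4 statements merged into one kernel-verified Lean document; each statement's English description precedes it below -/
import Mathlib

section
/- Let A, B ∈ S^n with A ≠ B. Then the inclusion {x ∈ ℝ^n : xᵀBx ≥ 0} ⊆ {x ∈ ℝ^n : xᵀAx ≥ 0} holds if and only if J_+(B) ⊆ J_+(A), where J_+(C) = {X ∈ S^n_+ : ⟨C,X⟩ ≥ 0}. -/
open Matrix

/-- J_+(C) = {X ∈ S^n_+ : ⟨C,X⟩ ≥ 0}. -/
def Jp {n : ℕ} (C : Matrix (Fin n) (Fin n) ℝ) : Set (Matrix (Fin n) (Fin n) ℝ) :=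
  {X | X.PosSemidef ∧ 0 ≤ (C * X).trace}

namespace Stmt5Aux

variable {n : ℕ}

/-- The quadratic form of a matrix. -/
def q (M : Matrix (Fin n) (Fin n) ℝ) (x : Fin n → ℝ) : ℝ := x ⬝ᵥ M.mulVec x

lemma q_expand (M : Matrix (Fin n) (Fin n) ℝ) (a b : ℝ) (x y : Fin n → ℝ) :
    q M (a • x + b • y) =
      a ^ 2 * q M x + a * b * (x ⬝ᵥ M.mulVec y + y ⬝ᵥ M.mulVec x) + b ^ 2 * q M y := by
  simp only [q, Matrix.mulVec_add, Matrix.mulVec_smul, dotProduct_add, add_dotProduct,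
    smul_dotProduct, dotProduct_smul, smul_eq_mul]
  ring

lemma q_smul (M : Matrix (Fin n) (Fin n) ℝ) (c : ℝ) (x : Fin n → ℝ) :
    q M (c • x) = c ^ 2 * q M x := by
  have := q_expand M c 0 x x
  simpa using this

lemma q_zero (M : Matrix (Fin n) (Fin n) ℝ) : q M 0 = 0 := by
  simp [q]

/-- Dines-style pairing: two vectors can be combined into one whose `q M` value is the
sum and whose `q N` value is at most the sum. -/
lemma pair (M N : Matrix (Fin n) (Fin n) ℝ) (x y : Fin n → ℝ) :
    ∃ z, q M z = q M x + q M y ∧ q N z ≤ q N x + q N y := by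
  set cM : ℝ := x ⬝ᵥ M.mulVec y + y ⬝ᵥ M.mulVec x with hcM
  set u : ℝ → (Fin n → ℝ) := fun θ => Real.cos θ • x + Real.sin θ • y with hu
  set h : ℝ → ℝ := fun θ =>
    (Real.cos θ ^ 2 - Real.sin θ ^ 2) * (q M x - q M y) + 2 * Real.cos θ * Real.sin θ * cM
    with hh
  -- h θ = q M (u θ) - q M (u (θ + π/2))
  have hu2 : ∀ θ, u (θ + Real.pi / 2) = (-Real.sin θ) • x + Real.cos θ • y := by
    intro θ
    simp [hu, Real.cos_add_pi_div_two, Real.sin_add_pi_div_two]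
  have hdiff : ∀ θ, q M (u θ) - q M (u (θ + Real.pi / 2)) = h θ := by
    intro θ
    rw [hu2 θ]
    simp only [hu, q_expand]
    ring
  have hsum : ∀ (P : Matrix (Fin n) (Fin n) ℝ) θ,
      q P (u θ) + q P (u (θ + Real.pi / 2)) = q P x + q P y := by
    intro P θ
    rw [hu2 θ]
    simp only [hu, q_expand]
    linear_combination (q P x + q P y) * (Real.sin_sq_add_cos_sq θ)
  have hcont : Continuous h := by fun_prop
  have h0 : h 0 = q M x - q M y := by simp [hh]
  have hpi2 : h (Real.pi / 2) = -(q M x - q M y) := by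
    simp [hh]
  have hmem : (0:ℝ) ∈ Set.uIcc (h 0) (h (Real.pi / 2)) := by
    rw [h0, hpi2, Set.mem_uIcc]
    rcases le_total 0 (q M x - q M y) with h' | h'
    · right; constructor <;> linarith
    · left; constructor <;> linarith
  obtain ⟨θ₀, -, hθ₀⟩ := intermediate_value_uIcc (hcont.continuousOn
    (s := Set.uIcc 0 (Real.pi / 2))) hmem
  have heq : q M (u θ₀) = q M (u (θ₀ + Real.pi / 2)) := by
    have := hdiff θ₀
    rw [hθ₀] at this
    linarith
  have hMsum := hsum M θ₀
  have hNsum := hsum N θ₀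
  rcases le_total (q N (u θ₀)) (q N (u (θ₀ + Real.pi / 2))) with hle | hle
  · refine ⟨Real.sqrt 2 • u θ₀, ?_, ?_⟩ <;>
      rw [q_smul, Real.sq_sqrt (by norm_num : (0:ℝ) ≤ 2)] <;> linarith
  · refine ⟨Real.sqrt 2 • u (θ₀ + Real.pi / 2), ?_, ?_⟩ <;>
      rw [q_smul, Real.sq_sqrt (by norm_num : (0:ℝ) ≤ 2)] <;> linarith

/-- A finite family of vectors can be combined into a single vector. -/
lemma combine (M N : Matrix (Fin n) (Fin n) ℝ) :
    ∀ (m : ℕ) (w : Fin m → (Fin n → ℝ)),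
      ∃ z, q M z = ∑ i, q M (w i) ∧ q N z ≤ ∑ i, q N (w i) := by
  intro m
  induction m with
  | zero =>
    intro w
    exact ⟨0, by simp [q_zero], by simp [q_zero]⟩
  | succ m ih =>
    intro w
    obtain ⟨z, hz1, hz2⟩ := ih (fun i => w i.castSucc)
    obtain ⟨z', hz'1, hz'2⟩ := pair M N z (w (Fin.last m))
    refine ⟨z', ?_, ?_⟩ <;> rw [Fin.sum_univ_castSucc]
    · rw [hz'1, hz1]
    · calc q N z' ≤ q N z + q N (w (Fin.last m)) := hz'2
        _ ≤ _ := by linarith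

lemma trace_eq (M C : Matrix (Fin n) (Fin n) ℝ) :
    (M * (Cᴴ * C)).trace = ∑ k, q M (fun j => C k j) := by
  rw [← Matrix.mul_assoc, Matrix.trace_mul_comm]
  simp only [q, Matrix.trace, Matrix.diag, Matrix.mul_apply, Matrix.conjTranspose_apply,
    star_trivial, dotProduct, Matrix.mulVec, Finset.mul_sum, Finset.sum_mul]

lemma trace_outer (M : Matrix (Fin n) (Fin n) ℝ) (x : Fin n → ℝ) :
    (M * vecMulVec x x).trace = q M x := by
  simp only [q, Matrix.trace, Matrix.diag, Matrix.mul_apply, Matrix.vecMulVec_apply,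
    dotProduct, Matrix.mulVec, Finset.mul_sum, Finset.sum_mul]
  refine Finset.sum_congr rfl fun i _ => Finset.sum_congr rfl fun j _ => ?_
  ring

lemma psd_outer (x : Fin n → ℝ) : (vecMulVec x x).PosSemidef := by
  refine Matrix.PosSemidef.of_dotProduct_mulVec_nonneg ?_ ?_
  · ext i j
    simp [Matrix.conjTranspose_apply, Matrix.vecMulVec_apply, mul_comm]
  · intro v
    have hmv : (vecMulVec x x) *ᵥ v = (x ⬝ᵥ v) • x := by
      ext i
      simp only [Matrix.mulVec, Matrix.vecMulVec_apply, dotProduct, Pi.smul_apply,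
        smul_eq_mul, Finset.sum_mul]
      refine Finset.sum_congr rfl fun j _ => ?_
      ring
    rw [hmv]
    simp only [star_trivial, dotProduct_smul, smul_eq_mul]
    rw [dotProduct_comm v x]
    exact mul_self_nonneg _

end Stmt5Aux

open Stmt5Aux

theorem stmt5 {n : ℕ} (A B : Matrix (Fin n) (Fin n) ℝ)
    (hA : A.IsSymm) (hB : B.IsSymm) (hAB : A ≠ B) :
    ({x : Fin n → ℝ | 0 ≤ x ⬝ᵥ B.mulVec x} ⊆ {x : Fin n → ℝ | 0 ≤ x ⬝ᵥ A.mulVec x})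
      ↔ Jp B ⊆ Jp A := by
  constructor
  · intro h X hX
    obtain ⟨hXpsd, hBX⟩ := hX
    obtain ⟨C, rfl⟩ : ∃ C : Matrix (Fin n) (Fin n) ℝ, X = Cᴴ * C := by
      open scoped MatrixOrder Matrix.Norms.L2Operator in
        exact CStarAlgebra.nonneg_iff_eq_star_mul_self.mp hXpsd.nonneg
    refine ⟨Matrix.posSemidef_conjTranspose_mul_self C, ?_⟩
    rw [trace_eq] at hBX ⊢
    obtain ⟨z, hz1, hz2⟩ := combine B A n (fun k j => C k j)
    have hzB : (0:ℝ) ≤ q B z := by rw [hz1]; exact hBX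
    have hzA : (0:ℝ) ≤ q A z := h hzB
    linarith
  · intro h x hx
    have hmem : vecMulVec x x ∈ Jp B := by
      refine ⟨psd_outer x, ?_⟩
      rw [trace_outer]
      exact hx
    obtain ⟨-, hAX⟩ := h hmem
    rw [trace_outer] at hAX
    exact hAX
end

section
/- Let A, B ∈ S^n with A ≠ B. If J_-(B) ⊆ J_+(A), then J_0(B) ⊆ J_+(A). Moreover, if additionally J_+(B) ⊄ J_+(A) (i.e., J_+(B) is not contained in J_+(A)), then J_0(B) ⊆ J_+(A) implies J_-(B) ⊆ J_+(A), so the two inclusions are equivalent. -/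
open Matrix

/-- J_-(C) = {X ∈ S^n_+ : ⟨C,X⟩ ≤ 0}. -/
def Jm {n : ℕ} (C : Matrix (Fin n) (Fin n) ℝ) : Set (Matrix (Fin n) (Fin n) ℝ) :=
  {X | X.PosSemidef ∧ (C * X).trace ≤ 0}

/-- J_0(C) = {X ∈ S^n_+ : ⟨C,X⟩ = 0}. -/
def J0 {n : ℕ} (C : Matrix (Fin n) (Fin n) ℝ) : Set (Matrix (Fin n) (Fin n) ℝ) :=
  {X | X.PosSemidef ∧ (C * X).trace = 0}

theorem stmt7 {n : ℕ} (A B : Matrix (Fin n) (Fin n) ℝ)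
    (hA : A.IsSymm) (hB : B.IsSymm) (hAB : A ≠ B) :
    (Jm B ⊆ Jp A → J0 B ⊆ Jp A) ∧
    (¬ (Jp B ⊆ Jp A) → (J0 B ⊆ Jp A ↔ Jm B ⊆ Jp A)) := by
  have h1 : Jm B ⊆ Jp A → J0 B ⊆ Jp A := fun h X hX => h ⟨hX.1, le_of_eq hX.2⟩
  refine ⟨h1, fun hnot => ⟨fun h0 X hX => ?_, h1⟩⟩
  -- get Y ∈ Jp B \ Jp A
  rw [Set.not_subset] at hnot
  obtain ⟨Y, hYB, hYA⟩ := hnot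
  have hYpsd : Y.PosSemidef := hYB.1
  have hAY : (A * Y).trace < 0 := by
    by_contra hc
    exact hYA ⟨hYpsd, le_of_not_gt hc⟩
  have hBY : 0 < (B * Y).trace := by
    rcases lt_or_eq_of_le hYB.2 with h | h
    · exact h
    · exact absurd (h0 ⟨hYpsd, h.symm⟩).2 (not_le.mpr hAY)
  -- X ∈ Jm B
  rcases lt_or_eq_of_le hX.2 with hBX | hBX
  · set t : ℝ := -(B * X).trace / (B * Y).trace with ht
    have htpos : 0 < t := div_pos (by linarith) hBY
    have hYt : (t • Y).PosSemidef := by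
      refine posSemidef_iff_dotProduct_mulVec.mpr ⟨by rw [Matrix.IsHermitian]; rw [conjTranspose_smul]; rw [show Yᴴ = Y from hYpsd.1.eq]; simp, fun x => ?_⟩
      have := (posSemidef_iff_dotProduct_mulVec.mp hYpsd).2 x
      simp only [smul_mulVec, dotProduct_smul, smul_eq_mul]
      positivity
    have hZpsd : (X + t • Y).PosSemidef := hX.1.add hYt
    have htrB : (B * (X + t • Y)).trace = 0 := by
      rw [mul_add, trace_add, Matrix.mul_smul, trace_smul, smul_eq_mul, ht,
        div_mul_cancel₀ _ (ne_of_gt hBY)]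
      ring
    have hZ := (h0 ⟨hZpsd, htrB⟩).2
    rw [mul_add, trace_add, Matrix.mul_smul, trace_smul, smul_eq_mul] at hZ
    have : t * (A * Y).trace < 0 := mul_neg_of_pos_of_neg htpos hAY
    exact ⟨hX.1, by linarith⟩
  · exact h0 ⟨hX.1, hBX⟩
end

section
/- Let B ⊆ S^n satisfy: (A-3) there exists a positive definite matrix in J_+(B); (A-4) no element of B is positive semidefinite unless B = {0}; (A-5) for all distinct A, B ∈ B, J_+(B) ⊄ J_+(A). Then for distinct A, B ∈ B, the following are equivalent: (i) J_0(B) ⊆ J_+(A); (ii) J_-(B) ⊆ J_+(A); (iii) αA + βB ∈ S^n_+ for some α > 0, β > 0; (iv) αA + βB ∈ S^n_+ for some (α,β) ≠ (0,0). -/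
open Matrix

/-- J_+(𝓑) = ⋂_{B ∈ 𝓑} J_+(B). -/
def JpFam {n : ℕ} (𝓑 : Set (Matrix (Fin n) (Fin n) ℝ)) : Set (Matrix (Fin n) (Fin n) ℝ) :=
  {X | X.PosSemidef ∧ ∀ B ∈ 𝓑, 0 ≤ (B * X).trace}


open scoped MatrixOrder in
lemma Matrix.posSemidef_iff_eq_transpose_mul_self {n : ℕ} {M : Matrix (Fin n) (Fin n) ℝ} :
    M.PosSemidef ↔ ∃ C : Matrix (Fin n) (Fin n) ℝ, M = Cᴴ * C := by
  refine ⟨fun hM => ?_, fun ⟨C, hC⟩ => hC ▸ posSemidef_conjTranspose_mul_self C⟩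
  obtain ⟨C, hC⟩ := CStarAlgebra.nonneg_iff_eq_star_mul_self.mp hM.nonneg
  exact ⟨C, hC⟩

open scoped MatrixOrder in
noncomputable def Matrix.PosSemidef.sqrt {n : ℕ} {X : Matrix (Fin n) (Fin n) ℝ}
    (_ : X.PosSemidef) : Matrix (Fin n) (Fin n) ℝ := CFC.sqrt X

open scoped MatrixOrder in
lemma Matrix.PosSemidef.posSemidef_sqrt {n : ℕ} {X : Matrix (Fin n) (Fin n) ℝ}
    (hX : X.PosSemidef) : hX.sqrt.PosSemidef := (CFC.sqrt_nonneg X).posSemidef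

open scoped MatrixOrder in
lemma Matrix.PosSemidef.sqrt_mul_self {n : ℕ} {X : Matrix (Fin n) (Fin n) ℝ}
    (hX : X.PosSemidef) : hX.sqrt * hX.sqrt = X := CFC.sqrt_mul_sqrt_self X hX.nonneg

namespace Stmt9Aux
variable {n : ℕ}

lemma isHermitian_of_isSymm {M : Matrix (Fin n) (Fin n) ℝ} (h : M.IsSymm) : M.IsHermitian := by
  show Mᴴ = M
  rw [conjTranspose_eq_transpose_of_trivial]
  exact h

lemma trace_nonneg_of_psd {M : Matrix (Fin n) (Fin n) ℝ} (hM : M.PosSemidef) : 0 ≤ M.trace := by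
  obtain ⟨C, rfl⟩ := Matrix.posSemidef_iff_eq_transpose_mul_self.mp hM
  rw [Matrix.trace]
  refine Finset.sum_nonneg fun i _ => ?_
  simp only [Matrix.diag_apply, Matrix.mul_apply, Matrix.conjTranspose_apply, star_trivial]
  exact Finset.sum_nonneg fun j _ => mul_self_nonneg _

lemma psd_eq_zero_of_trace {M : Matrix (Fin n) (Fin n) ℝ} (hM : M.PosSemidef)
    (h : M.trace ≤ 0) : M = 0 := by
  obtain ⟨C, rfl⟩ := Matrix.posSemidef_iff_eq_transpose_mul_self.mp hM
  suffices hC : C = 0 by simp [hC]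
  have htr : (Cᴴ * C).trace = ∑ i, ∑ j, C j i * C j i := by
    simp [Matrix.trace, Matrix.diag_apply, Matrix.mul_apply, Matrix.conjTranspose_apply]
  rw [htr] at h
  have hz : ∑ i, ∑ j, C j i * C j i = 0 :=
    le_antisymm h (Finset.sum_nonneg fun i _ => Finset.sum_nonneg fun j _ => mul_self_nonneg _)
  ext j i
  have h1 := (Finset.sum_eq_zero_iff_of_nonneg
    (fun i _ => Finset.sum_nonneg fun j _ => mul_self_nonneg (C j i))).mp hz i (Finset.mem_univ i)
  have h2 := (Finset.sum_eq_zero_iff_of_nonneg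
    (fun j _ => mul_self_nonneg (C j i))).mp h1 j (Finset.mem_univ j)
  simpa using mul_self_eq_zero.mp h2

lemma trace_mul_sqrt {M X : Matrix (Fin n) (Fin n) ℝ} (hX : X.PosSemidef) :
    (M * X).trace = (hX.sqrt * M * hX.sqrt).trace := by
  conv_lhs => rw [← hX.sqrt_mul_self]
  rw [← mul_assoc, trace_mul_comm, ← mul_assoc]

lemma sandwich_psd {M X : Matrix (Fin n) (Fin n) ℝ} (hM : M.PosSemidef) (hX : X.PosSemidef) :
    (hX.sqrt * M * hX.sqrt).PosSemidef := by
  have h := hM.mul_mul_conjTranspose_same hX.sqrt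
  rwa [hX.posSemidef_sqrt.isHermitian.eq] at h

lemma trace_mul_psd_nonneg {M X : Matrix (Fin n) (Fin n) ℝ}
    (hM : M.PosSemidef) (hX : X.PosSemidef) : 0 ≤ (M * X).trace := by
  rw [trace_mul_sqrt hX]
  exact trace_nonneg_of_psd (sandwich_psd hM hX)

lemma psd_zero_of_trace_mul_pd {M X : Matrix (Fin n) (Fin n) ℝ} (hM : M.PosSemidef)
    (hX : X.PosDef) (h : (M * X).trace ≤ 0) : M = 0 := by
  have hXs := hX.posSemidef
  rw [trace_mul_sqrt hXs] at h
  have hz : hXs.sqrt * M * hXs.sqrt = 0 := psd_eq_zero_of_trace (sandwich_psd hM hXs) h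
  have hdet : IsUnit hXs.sqrt.det := by
    have hd : hXs.sqrt.det * hXs.sqrt.det = X.det := by rw [← det_mul, hXs.sqrt_mul_self]
    have := hX.det_pos
    refine isUnit_iff_ne_zero.mpr fun h0 => ?_
    rw [h0, zero_mul] at hd
    linarith
  have hM' : hXs.sqrt⁻¹ * (hXs.sqrt * M * hXs.sqrt) * hXs.sqrt⁻¹ = M := by
    rw [mul_assoc hXs.sqrt M, Matrix.nonsing_inv_mul_cancel_left _ _ hdet,
      Matrix.mul_nonsing_inv_cancel_right _ _ hdet]
  rw [← hM', hz, Matrix.mul_zero, Matrix.zero_mul]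

lemma psd_smul {M : Matrix (Fin n) (Fin n) ℝ} (hM : M.PosSemidef) {c : ℝ} (hc : 0 ≤ c) :
    (c • M).PosSemidef := by
  refine PosSemidef.of_dotProduct_mulVec_nonneg ?_ ?_
  · have h1 : Mᵀ = M := by rw [← conjTranspose_eq_transpose_of_trivial]; exact hM.1
    show (c • M)ᴴ = c • M
    rw [conjTranspose_eq_transpose_of_trivial, transpose_smul, h1]
  · intro x
    rw [smul_mulVec, dotProduct_smul, smul_eq_mul]
    exact mul_nonneg hc (hM.dotProduct_mulVec_nonneg x)

lemma vecMulVec_psd (v : Fin n → ℝ) : (vecMulVec v v).PosSemidef := by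
  refine PosSemidef.of_dotProduct_mulVec_nonneg ?_ ?_
  · show (vecMulVec v v)ᴴ = vecMulVec v v
    rw [conjTranspose_eq_transpose_of_trivial]
    ext i j
    simp [vecMulVec_apply, mul_comm]
  · intro x
    have hmv : (vecMulVec v v) *ᵥ x = (v ⬝ᵥ x) • v := by
      ext i
      simp [mulVec, vecMulVec_apply, dotProduct, Finset.mul_sum, mul_assoc, mul_comm, mul_left_comm]
    rw [star_trivial, hmv, dotProduct_smul, smul_eq_mul, dotProduct_comm]
    exact mul_self_nonneg _

lemma trace_mul_vecMulVec (M : Matrix (Fin n) (Fin n) ℝ) (v : Fin n → ℝ) :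
    (M * vecMulVec v v).trace = v ⬝ᵥ (M *ᵥ v) := by
  simp only [Matrix.trace, Matrix.diag_apply, Matrix.mul_apply, vecMulVec_apply, dotProduct,
    Matrix.mulVec, Finset.mul_sum]
  exact Finset.sum_congr rfl fun i _ => Finset.sum_congr rfl fun j _ => by ring

lemma posSemidef_of_trace {M : Matrix (Fin n) (Fin n) ℝ} (hsym : M.IsSymm)
    (h : ∀ X : Matrix (Fin n) (Fin n) ℝ, X.PosSemidef → 0 ≤ (M * X).trace) : M.PosSemidef := by
  refine PosSemidef.of_dotProduct_mulVec_nonneg (isHermitian_of_isSymm hsym) fun x => ?_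
  have h1 := h _ (vecMulVec_psd x)
  rw [trace_mul_vecMulVec] at h1
  rwa [star_trivial]

lemma traceLin (X : Matrix (Fin n) (Fin n) ℝ) (α β : ℝ) (A B : Matrix (Fin n) (Fin n) ℝ) :
    ((α • A + β • B) * X).trace = α * (A * X).trace + β * (B * X).trace := by
  rw [Matrix.add_mul, Matrix.smul_mul, Matrix.smul_mul, trace_add, trace_smul, trace_smul,
    smul_eq_mul, smul_eq_mul]

lemma traceLin2 (C : Matrix (Fin n) (Fin n) ℝ) (s t : ℝ) (X Y : Matrix (Fin n) (Fin n) ℝ) :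
    (C * (s • X + t • Y)).trace = s * (C * X).trace + t * (C * Y).trace := by
  rw [Matrix.mul_add, Matrix.mul_smul, Matrix.mul_smul, trace_add, trace_smul, trace_smul,
    smul_eq_mul, smul_eq_mul]

end Stmt9Aux

theorem stmt9 {n : ℕ} (𝓑 : Set (Matrix (Fin n) (Fin n) ℝ))
    (hsymm : ∀ B ∈ 𝓑, B.IsSymm)
    (hA3 : ∃ X ∈ JpFam 𝓑, X.PosDef)
    (hA4 : (∀ A ∈ 𝓑, ¬ A.PosSemidef) ∨ 𝓑 = {0})
    (hA5 : ∀ A ∈ 𝓑, ∀ B ∈ 𝓑, A ≠ B → ¬ (Jp B ⊆ Jp A))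
    (A B : Matrix (Fin n) (Fin n) ℝ) (hAmem : A ∈ 𝓑) (hBmem : B ∈ 𝓑) (hAB : A ≠ B) :
    (J0 B ⊆ Jp A ↔ Jm B ⊆ Jp A) ∧
    (Jm B ⊆ Jp A ↔ ∃ α β : ℝ, 0 < α ∧ 0 < β ∧ (α • A + β • B).PosSemidef) ∧
    ((∃ α β : ℝ, 0 < α ∧ 0 < β ∧ (α • A + β • B).PosSemidef) ↔
      ∃ α β : ℝ, (α, β) ≠ (0, 0) ∧ (α • A + β • B).PosSemidef) := by
  classical
  open Stmt9Aux in
  -- 𝓑 ≠ {0}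
  have hBne : 𝓑 ≠ {0} := by
    intro h
    rw [h] at hAmem hBmem
    exact hAB (hAmem.trans hBmem.symm)
  have hnpsd : ∀ C ∈ 𝓑, ¬ C.PosSemidef := hA4.resolve_right hBne
  obtain ⟨X₀, ⟨hX₀psd, hX₀tr⟩, hX₀pd⟩ := hA3
  have ha₀ : 0 ≤ (A * X₀).trace := hX₀tr A hAmem
  have hb₀ : 0 ≤ (B * X₀).trace := hX₀tr B hBmem
  have hP1 : ¬ (Jp B ⊆ Jp A) := hA5 A hAmem B hBmem hAB
  have hP2 : ¬ (Jp A ⊆ Jp B) := hA5 B hBmem A hAmem hAB.symm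
  obtain ⟨X₁, hX₁Jp, hX₁n⟩ := Set.not_subset.mp hP1
  obtain ⟨hX₁psd, hb₁⟩ := hX₁Jp
  have ha₁ : (A * X₁).trace < 0 := by
    by_contra h
    exact hX₁n ⟨hX₁psd, le_of_not_gt h⟩
  obtain ⟨X₂, hX₂Jp, hX₂n⟩ := Set.not_subset.mp hP2
  obtain ⟨hX₂psd, ha₂⟩ := hX₂Jp
  have hb₂ : (B * X₂).trace < 0 := by
    by_contra h
    exact hX₂n ⟨hX₂psd, le_of_not_gt h⟩
  -- (iii) → (ii)
  have h32 : (∃ α β : ℝ, 0 < α ∧ 0 < β ∧ (α • A + β • B).PosSemidef) → Jm B ⊆ Jp A := by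
    rintro ⟨α, β, hα, hβ, hM⟩ X ⟨hX, hbX⟩
    refine ⟨hX, ?_⟩
    have h1 : 0 ≤ ((α • A + β • B) * X).trace := trace_mul_psd_nonneg hM hX
    rw [traceLin] at h1
    nlinarith [mul_nonpos_of_nonneg_of_nonpos hβ.le hbX]
  -- (ii) → (i)
  have h21 : Jm B ⊆ Jp A → J0 B ⊆ Jp A := fun h X hX => h ⟨hX.1, le_of_eq hX.2⟩
  -- (i) → (iii)
  have h13 : J0 B ⊆ Jp A → ∃ α β : ℝ, 0 < α ∧ 0 < β ∧ (α • A + β • B).PosSemidef := by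
    intro h0
    have hb₁pos : 0 < (B * X₁).trace := by
      rcases lt_or_eq_of_le hb₁ with h | h
      · exact h
      · exact absurd (h0 ⟨hX₁psd, h.symm⟩).2 (not_le.mpr ha₁)
    set K : Set (ℝ × ℝ) :=
      (fun X => ((A * X).trace, (B * X).trace)) '' {X | X.PosSemidef} with hK
    have hKmem : ∀ X : Matrix (Fin n) (Fin n) ℝ, X.PosSemidef →
        ((A * X).trace, (B * X).trace) ∈ K := fun X hX => ⟨X, hX, rfl⟩
    have hKconv : Convex ℝ K := by
      rintro p ⟨X, hX, rfl⟩ q ⟨Y, hY, rfl⟩ s t hs ht _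
      refine ⟨s • X + t • Y, (psd_smul hX hs).add (psd_smul hY ht), ?_⟩
      simp only [traceLin2, Prod.smul_mk, Prod.mk_add_mk, smul_eq_mul]
    have hKcone : ∀ p ∈ K, ∀ t : ℝ, 0 ≤ t → t • p ∈ K := by
      rintro p ⟨X, hX, rfl⟩ t ht
      refine ⟨t • X, psd_smul hX ht, ?_⟩
      simp only [Matrix.mul_smul, trace_smul, smul_eq_mul, Prod.smul_mk]
    have h0K : (0 : ℝ × ℝ) ∈ K := ⟨0, Matrix.PosSemidef.zero, by simp⟩
    -- the point (-1,0) is not in the closure of K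
    have hnot : ((-1, 0) : ℝ × ℝ) ∉ closure K := by
      intro hcl
      set a₂ := (A * X₂).trace with ha₂def
      set b₂ := (B * X₂).trace with hb₂def
      set ε : ℝ := min 2⁻¹ (min (-b₂) ((-b₂) / (8 * (a₂ + 1)))) with hε
      have hεpos : 0 < ε := by
        have h1 : (0:ℝ) < -b₂ := by linarith
        have h2 : (0:ℝ) < 8 * (a₂ + 1) := by linarith
        have := div_pos h1 h2
        positivity
      obtain ⟨p, hpK, hdist⟩ := Metric.mem_closure_iff.mp hcl ε hεpos
      obtain ⟨X, hXpsd, rfl⟩ := hpK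
      set a := (A * X).trace with hadef
      set b := (B * X).trace with hbdef
      simp only [Prod.dist_eq, sup_lt_iff] at hdist
      obtain ⟨hd1, hd2⟩ := hdist
      rw [Real.dist_eq] at hd1 hd2
      have haval : a < -2⁻¹ := by
        have h2 : ε ≤ 2⁻¹ := min_le_left _ _
        have h3 := abs_lt.mp hd1
        rw [← hadef] at h3
        linarith [h3.1, h3.2]
      have hbval : |b| < ε := by
        have h3 := abs_lt.mp hd2
        rw [← hbdef] at h3
        rw [abs_lt]
        constructor <;> linarith [h3.1, h3.2]
      rcases lt_trichotomy b 0 with hb | hb | hb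
      · -- Y := b₁ • X + (-b) • X₁
        set b₁ := (B * X₁).trace
        have hYpsd : (b₁ • X + (-b) • X₁).PosSemidef :=
          (psd_smul hXpsd hb₁pos.le).add (psd_smul hX₁psd (by linarith))
        have hbY : (B * (b₁ • X + (-b) • X₁)).trace = 0 := by
          rw [traceLin2, ← hbdef]; ring
        have haY : (A * (b₁ • X + (-b) • X₁)).trace < 0 := by
          rw [traceLin2]
          have h1 : b₁ * a < 0 := mul_neg_of_pos_of_neg hb₁pos (by linarith)
          have h2 : (-b) * (A * X₁).trace < 0 := mul_neg_of_pos_of_neg (by linarith) ha₁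
          rw [← hadef]; linarith
        exact absurd (h0 ⟨hYpsd, hbY⟩).2 (not_le.mpr haY)
      · exact absurd (h0 ⟨hXpsd, hb⟩).2 (not_le.mpr (by linarith))
      · -- Y := (-b₂) • X + b • X₂
        have hYpsd : ((-b₂) • X + b • X₂).PosSemidef :=
          (psd_smul hXpsd (by linarith)).add (psd_smul hX₂psd hb.le)
        have hbY : (B * ((-b₂) • X + b • X₂)).trace = 0 := by
          rw [traceLin2, ← hbdef, ← hb₂def]; ring
        have haY : (A * ((-b₂) • X + b • X₂)).trace < 0 := by
          rw [traceLin2, ← hadef, ← ha₂def]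
          have hbε : b < ε := lt_of_abs_lt hbval
          have hε2 : ε ≤ (-b₂) / (8 * (a₂ + 1)) := le_trans (min_le_right _ _) (min_le_right _ _)
          have hden : (0:ℝ) < 8 * (a₂ + 1) := by linarith
          have hε3 : ε * (8 * (a₂ + 1)) ≤ -b₂ := by
            rw [← le_div_iff₀ hden]; exact hε2
          have e1 : (-b₂) * a < (-b₂) * (-2⁻¹) :=
            mul_lt_mul_of_pos_left haval (by linarith)
          have e2 : b * a₂ ≤ ε * a₂ := mul_le_mul_of_nonneg_right hbε.le ha₂
          nlinarith [hεpos, ha₂]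
        exact absurd (h0 ⟨hYpsd, hbY⟩).2 (not_le.mpr haY)
    -- separation
    obtain ⟨f, u, hfu, hux⟩ :=
      geometric_hahn_banach_closed_point hKconv.closure isClosed_closure hnot
    have hu0 : 0 < u := by
      have := hfu 0 (subset_closure h0K)
      rwa [map_zero] at this
    have hfK : ∀ p ∈ K, f p ≤ 0 := by
      intro p hp
      by_contra hpos
      push_neg at hpos
      have ht : (0:ℝ) ≤ (u + 1) / f p := div_nonneg (by linarith) hpos.le
      have hmem := subset_closure (hKcone p hp _ ht)
      have := hfu _ hmem
      rw [_root_.map_smul, smul_eq_mul, div_mul_cancel₀ _ hpos.ne'] at this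
      linarith
    set α : ℝ := -(f (1, 0)) with hαdef
    set β : ℝ := -(f (0, 1)) with hβdef
    have hfp : ∀ x y : ℝ, f (x, y) = x * f (1, 0) + y * f (0, 1) := by
      intro x y
      have hxy : ((x, y) : ℝ × ℝ) = x • ((1:ℝ), (0:ℝ)) + y • ((0:ℝ), (1:ℝ)) := by
        simp [Prod.ext_iff]
      rw [hxy, map_add, _root_.map_smul, _root_.map_smul, smul_eq_mul, smul_eq_mul]
    have hα : 0 < α := by
      have h1 : f (-1, 0) = α := by rw [hfp]; simp [hαdef]
      linarith [hux, h1 ▸ hux]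
    have hMpsd : (α • A + β • B).PosSemidef := by
      refine posSemidef_of_trace ?_ fun X hX => ?_
      · show (α • A + β • B)ᵀ = _
        rw [transpose_add, transpose_smul, transpose_smul, hsymm A hAmem, hsymm B hBmem]
      · have h1 := hfK _ (hKmem X hX)
        rw [hfp] at h1
        rw [traceLin]
        have hfa : f (1, 0) = -α := by rw [hαdef]; ring
        have hfb : f (0, 1) = -β := by rw [hβdef]; ring
        rw [hfa, hfb] at h1
        nlinarith
    have hβ : 0 < β := by
      by_contra hβn
      push_neg at hβn
      refine hP1 fun X hX => ?_
      obtain ⟨hXpsd, hbX⟩ := hX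
      refine ⟨hXpsd, ?_⟩
      have h1 : 0 ≤ ((α • A + β • B) * X).trace := trace_mul_psd_nonneg hMpsd hXpsd
      rw [traceLin] at h1
      have h2 : β * (B * X).trace ≤ 0 := mul_nonpos_of_nonpos_of_nonneg hβn hbX
      have h3 : 0 ≤ α * (A * X).trace := by linarith
      exact nonneg_of_mul_nonneg_right h3 hα
    exact ⟨α, β, hα, hβ, hMpsd⟩
  -- (iv) → (iii)
  have h43 : (∃ α β : ℝ, (α, β) ≠ (0, 0) ∧ (α • A + β • B).PosSemidef) →
      ∃ α β : ℝ, 0 < α ∧ 0 < β ∧ (α • A + β • B).PosSemidef := by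
    rintro ⟨α, β, hne, hM⟩
    rcases le_or_gt α 0 with hα | hα <;> rcases le_or_gt β 0 with hβ | hβ
    · -- both nonpositive: α•A+β•B = 0
      have htr : ((α • A + β • B) * X₀).trace ≤ 0 := by
        rw [traceLin]
        nlinarith [mul_nonpos_of_nonpos_of_nonneg hα ha₀, mul_nonpos_of_nonpos_of_nonneg hβ hb₀]
      have hM0 : α • A + β • B = 0 := psd_zero_of_trace_mul_pd hM hX₀pd htr
      rcases lt_or_eq_of_le hα with hα' | hα'
      · rcases lt_or_eq_of_le hβ with hβ' | hβ'
        · refine ⟨-α, -β, by linarith, by linarith, ?_⟩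
          have : (-α) • A + (-β) • B = -(α • A + β • B) := by
            rw [neg_smul, neg_smul, neg_add]
          rw [this, hM0, neg_zero]
          exact Matrix.PosSemidef.zero
        · exfalso
          rw [hβ', zero_smul, add_zero] at hM0
          have hA0 : A = 0 := by
            have := smul_eq_zero.mp hM0
            rcases this with h | h
            · exact absurd h hα'.ne
            · exact h
          exact hnpsd A hAmem (hA0 ▸ Matrix.PosSemidef.zero)
      · exfalso
        rw [hα', zero_smul, zero_add] at hM0
        have hβ' : β ≠ 0 := by
          intro h
          exact hne (by rw [hα', h])
        have hB0 : B = 0 := by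
          rcases smul_eq_zero.mp hM0 with h | h
          · exact absurd h hβ'
          · exact h
        exact hnpsd B hBmem (hB0 ▸ Matrix.PosSemidef.zero)
    · -- α ≤ 0 < β : Jp A ⊆ Jp B, contradiction
      exfalso
      refine hP2 fun X hX => ?_
      obtain ⟨hXpsd, haX⟩ := hX
      refine ⟨hXpsd, ?_⟩
      have h1 : 0 ≤ ((α • A + β • B) * X).trace := trace_mul_psd_nonneg hM hXpsd
      rw [traceLin] at h1
      have h2 : α * (A * X).trace ≤ 0 := mul_nonpos_of_nonpos_of_nonneg hα haX
      have h3 : 0 ≤ β * (B * X).trace := by linarith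
      exact nonneg_of_mul_nonneg_right h3 hβ
    · -- β ≤ 0 < α : Jp B ⊆ Jp A, contradiction
      exfalso
      refine hP1 fun X hX => ?_
      obtain ⟨hXpsd, hbX⟩ := hX
      refine ⟨hXpsd, ?_⟩
      have h1 : 0 ≤ ((α • A + β • B) * X).trace := trace_mul_psd_nonneg hM hXpsd
      rw [traceLin] at h1
      have h2 : β * (B * X).trace ≤ 0 := mul_nonpos_of_nonpos_of_nonneg hβ hbX
      have h3 : 0 ≤ α * (A * X).trace := by linarith
      exact nonneg_of_mul_nonneg_right h3 hα
    · exact ⟨α, β, hα, hβ, hM⟩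
  refine ⟨⟨fun h => h32 (h13 h), h21⟩,
    ⟨fun h => h13 (h21 h), h32⟩,
    ⟨?_, h43⟩⟩
  rintro ⟨α, β, hα, hβ, hM⟩
  refine ⟨α, β, fun hc => ?_, hM⟩
  rw [Prod.ext_iff] at hc
  exact hα.ne' hc.1
end

section
/- Suppose B ⊆ S^n satisfies condition (B) (for all distinct A, B ∈ B, J_0(B) ⊆ J_+(A)) and condition (A-5) (for all distinct A, B ∈ B, J_+(B) ⊄ J_+(A)). Define B_0 = {B ∈ B : ⟨B,X⟩ = 0 for every X ∈ J_+(B)}. Then exactly one of the following holds: (a) there exists B̄ ∈ B_0 and in that case J_+(B) = J_0(B̄); or (b) B_0 = ∅ and then for every distinct A, B ∈ B, J_-(B) is a proper subset of J_+(A). -/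
open Matrix

lemma posSemidef_smul {n : ℕ} {W : Matrix (Fin n) (Fin n) ℝ} (hW : W.PosSemidef)
    {c : ℝ} (hc : 0 ≤ c) : (c • W).PosSemidef := by
  refine ⟨?_, fun x => ?_⟩
  · unfold Matrix.IsHermitian
    rw [conjTranspose_smul, hW.1]
    simp
  · exact (hW.smul hc).2 x

lemma trace_mul_add_smul {n : ℕ} (C X W : Matrix (Fin n) (Fin n) ℝ) (c : ℝ) :
    (C * (X + c • W)).trace = (C * X).trace + c * (C * W).trace := by
  rw [Matrix.mul_add, Matrix.trace_add, Matrix.mul_smul, Matrix.trace_smul, smul_eq_mul]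

theorem stmt10 {n : ℕ} (𝓑 : Set (Matrix (Fin n) (Fin n) ℝ))
    (hsymm : ∀ B ∈ 𝓑, B.IsSymm)
    (hcondB : ∀ A ∈ 𝓑, ∀ B ∈ 𝓑, A ≠ B → J0 B ⊆ Jp A)
    (hA5 : ∀ A ∈ 𝓑, ∀ B ∈ 𝓑, A ≠ B → ¬ (Jp B ⊆ Jp A)) :
    (∃ B₀ ∈ 𝓑, (∀ X ∈ JpFam 𝓑, (B₀ * X).trace = 0) ∧ JpFam 𝓑 = J0 B₀) ∨
    ({B ∈ 𝓑 | ∀ X ∈ JpFam 𝓑, (B * X).trace = 0} = ∅ ∧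
      ∀ A ∈ 𝓑, ∀ B ∈ 𝓑, A ≠ B → Jm B ⊂ Jp A) := by
  by_cases h : ∃ B₀ ∈ 𝓑, ∀ X ∈ JpFam 𝓑, (B₀ * X).trace = 0
  · left
    obtain ⟨B₀, hB₀, hz⟩ := h
    refine ⟨B₀, hB₀, hz, ?_⟩
    ext X
    constructor
    · rintro ⟨hpsd, hall⟩
      exact ⟨hpsd, hz X ⟨hpsd, hall⟩⟩
    · rintro ⟨hpsd, h0⟩
      refine ⟨hpsd, fun B hB => ?_⟩
      rcases eq_or_ne B B₀ with rfl | hne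
      · exact h0.ge
      · exact (hcondB B hB B₀ hB₀ hne ⟨hpsd, h0⟩).2
  · right
    push_neg at h
    constructor
    · ext B
      simp only [Set.mem_setOf_eq, Set.mem_empty_iff_false, iff_false, not_and]
      intro hB hall
      obtain ⟨X, hX, hne⟩ := h B hB
      exact hne (hall X hX)
    · intro A hA B hB hAB
      rw [ssubset_iff_subset_not_subset]
      constructor
      · rintro X ⟨hX, hBX⟩
        refine ⟨hX, ?_⟩
        by_contra hAX
        push_neg at hAX
        rcases hBX.lt_or_eq with hb | hb0
        · -- (B*X).trace < 0, (A*X).trace < 0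
          obtain ⟨W, hWB, hWA⟩ := Set.not_subset.1 (hA5 A hA B hB hAB)
          obtain ⟨hWpsd, hβ⟩ := hWB
          have hα : (A * W).trace < 0 := by
            by_contra hge
            exact hWA ⟨hWpsd, le_of_not_gt hge⟩
          have hβpos : 0 < (B * W).trace := by
            rcases hβ.lt_or_eq with h1 | h1
            · exact h1
            · exact absurd (hcondB A hA B hB hAB ⟨hWpsd, h1.symm⟩).2 (not_le.2 hα)
          set c : ℝ := -(B * X).trace / (B * W).trace with hc
          have hcpos : 0 < c := div_pos (by linarith) hβpos
          have hVpsd : (X + c • W).PosSemidef :=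
            hX.add (posSemidef_smul hWpsd (le_of_lt hcpos))
          have hVB : (B * (X + c • W)).trace = 0 := by
            rw [trace_mul_add_smul, hc, div_mul_cancel₀ _ (ne_of_gt hβpos)]
            ring
          have := (hcondB A hA B hB hAB ⟨hVpsd, hVB⟩).2
          rw [trace_mul_add_smul] at this
          nlinarith
        · exact absurd (hcondB A hA B hB hAB ⟨hX, hb0⟩).2 (not_le.2 hAX)
      · intro hsub
        obtain ⟨Y, hY, hne⟩ := h B hB
        have hYpos : 0 < (B * Y).trace := lt_of_le_of_ne (hY.2 B hB) (Ne.symm hne)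
        have : Y ∈ Jm B := hsub ⟨hY.1, hY.2 A hA⟩
        exact absurd this.2 (not_le.2 hYpos)
end
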